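/- If T is a tree on n ≥ 2 vertices and S is a stable set of T with |S| ≥ n/2, then S contains at least one pendant vertex of T. -/
import Mathlib


open Finset SimpleGraph
open scoped Classical

variable {V : Type*}

/-- A stable (independent) set of vertices. -/
def stableSet (G : SimpleGraph V) (S : Finset V) : Prop :=
  ∀ u ∈ S, ∀ w ∈ S, ¬ G.Adj u w

/-- A maximum stable set. -/
def maxStableSet [Fintype V] (G : SimpleGraph V) (S : Finset V) : Prop :=
  stableSet G S ∧ ∀ S' : Finset V, stableSet G S' → S'.card ≤ S.card

/-- The independence number α(G). -/
noncomputable def alphaNum [Fintype V] (G : SimpleGraph V) : ℕ :=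
  ((Finset.univ : Finset V).powerset.filter (fun S => stableSet G S)).sup Finset.card

/-- core(G): the intersection of all maximum stable sets of G. -/
noncomputable def coreSet [Fintype V] (G : SimpleGraph V) : Finset V :=
  Finset.univ.filter (fun v => ∀ S : Finset V, maxStableSet G S → v ∈ S)

/-- A pendant vertex: a vertex with exactly one neighbor. -/
def pendant (G : SimpleGraph V) (v : V) : Prop :=
  ∃! w, G.Adj v w

/-- {A, B} is a bipartition of G into color classes. -/
def isBipartition [Fintype V] (G : SimpleGraph V) (A B : Finset V) : Prop :=
  Disjoint A B ∧ A ∪ B = Finset.univ ∧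
    ∀ u v, G.Adj u v → (u ∈ A ∧ v ∈ B) ∨ (u ∈ B ∧ v ∈ A)

theorem stmt1 [Fintype V] (T : SimpleGraph V) (hT : T.IsTree)
    (hn : 2 ≤ Fintype.card V) (S : Finset V) (hS : stableSet T S)
    (hcard : Fintype.card V ≤ 2 * S.card) :
    ∃ v ∈ S, pendant T v := by
  classical
  by_contra h
  push_neg at h
  have hdeg : ∀ v ∈ S, 2 ≤ T.degree v := by
    intro v hv
    have hpos : 0 < T.degree v := by
      obtain ⟨w, hw⟩ := Fintype.exists_ne_of_one_lt_card (by omega) v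
      obtain ⟨p⟩ := hT.isConnected.preconnected v w
      rw [T.degree_pos_iff_exists_adj]
      cases p with
      | nil => exact absurd rfl hw
      | cons ha _ => exact ⟨_, ha⟩
    have hne : T.degree v ≠ 1 := by
      intro h1
      obtain ⟨w, hw⟩ := Finset.card_eq_one.1 h1
      refine h v hv ⟨w, ?_, ?_⟩
      · show T.Adj v w
        rw [← T.mem_neighborFinset, hw]; exact Finset.mem_singleton_self w
      · intro y hy
        have : y ∈ T.neighborFinset v := (T.mem_neighborFinset v y).2 hy
        rw [hw] at this; exact Finset.mem_singleton.1 this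
    omega
  have hdisj : ∀ u ∈ S, ∀ v ∈ S, u ≠ v →
      Disjoint (T.incidenceFinset u) (T.incidenceFinset v) := by
    intro u hu v hv huv
    rw [Finset.disjoint_left]
    intro e heu hev
    rw [mem_incidenceFinset] at heu hev
    have he : e = s(u, v) := Sym2.mem_and_mem_iff huv |>.1 ⟨heu.2, hev.2⟩
    have : T.Adj u v := by
      have := heu.1
      rwa [he, mem_edgeSet] at this
    exact hS u hu v hv this
  have hsum : ∑ v ∈ S, T.degree v = (S.biUnion (fun v => T.incidenceFinset v)).card := by
    rw [Finset.card_biUnion (fun u hu v hv huv => hdisj u hu v hv huv)]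
    simp [card_incidenceFinset_eq_degree]
  have hsub : S.biUnion (fun v => T.incidenceFinset v) ⊆ T.edgeFinset := by
    intro e he
    obtain ⟨v, hv, he⟩ := Finset.mem_biUnion.1 he
    rw [mem_incidenceFinset] at he
    rw [mem_edgeFinset]; exact he.1
  have h1 : 2 * S.card ≤ ∑ v ∈ S, T.degree v := by
    calc 2 * S.card = ∑ _v ∈ S, 2 := by simp [mul_comm]
    _ ≤ _ := Finset.sum_le_sum hdeg
  have h2 := Finset.card_le_card hsub
  have h3 := hT.card_edgeFinset
  omega
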